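/- Let k be a field of characteristic 0. The naively transferred cooperations stabilise: for all integers n ≥ 1 and all N, N' with N > n and N' > n, the maps θ^{⊗n}∘δ^{(n−1)}∘ω_N and θ^{⊗n}∘δ^{(n−1)}∘ω_{N'} from C to C^{⊗n} are equal. -/

import Mathlib

open Finsupp TensorProduct

noncomputable section

variable (k : Type) [Field k] [CharZero k]

/-- Underlying space of `Ω∨`: basis `α i ↔ Sum.inl i`, `β i ↔ Sum.inr i`. -/
abbrev Om : Type := (ℕ ⊕ ℕ) →₀ k

/-- the basis vector `α_i` of `Ω∨` (degree 0, dual of `t^i`) -/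
def av (i : ℕ) : Om k := Finsupp.single (Sum.inl i) 1

/-- the basis vector `β_i` of `Ω∨` (degree 1, dual of `t^i dt`) -/
def bv (i : ℕ) : Om k := Finsupp.single (Sum.inr i) 1

/-- the differential of `Ω∨`: `d β_i = (i+1) α_{i+1}`, `d α_i = 0`. -/
def dOm : Om k →ₗ[k] Om k :=
  Finsupp.lift (Om k) k (ℕ ⊕ ℕ) fun x =>
    match x with
    | Sum.inl _ => 0
    | Sum.inr i => ((i : k) + 1) • av k (i + 1)

/-- Underlying space of `C = C_•([0,1])`: basis `𝟎 ↔ 0`, `𝟏 ↔ 1`, `𝟎𝟏 ↔ 2`. -/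
abbrev Cc : Type := Fin 3 →₀ k

/-- the degree-0 basis vector `𝟎` of `C` -/
def c0 : Cc k := Finsupp.single 0 1
/-- the degree-0 basis vector `𝟏` of `C` -/
def c1 : Cc k := Finsupp.single 1 1
/-- the degree-1 basis vector `𝟎𝟏` of `C` -/
def c01 : Cc k := Finsupp.single 2 1

/-- the differential of `C`: `d 𝟎𝟏 = 𝟏 - 𝟎`, `d 𝟎 = d 𝟏 = 0`. -/
def dC : Cc k →ₗ[k] Cc k :=
  Finsupp.lift (Cc k) k (Fin 3) fun x => if x = 2 then c1 k - c0 k else 0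

/-- the projection `θ : Ω∨ → C`. -/
def θm : Om k →ₗ[k] Cc k :=
  Finsupp.lift (Cc k) k (ℕ ⊕ ℕ) fun x =>
    match x with
    | Sum.inl 0 => c0 k
    | Sum.inl 1 => c1 k - c0 k
    | Sum.inl _ => 0
    | Sum.inr 0 => c01 k
    | Sum.inr _ => 0

/-- the inclusion `ω_N : C → Ω∨`. -/
def ωm (N : ℕ) : Cc k →ₗ[k] Om k :=
  Finsupp.lift (Om k) k (Fin 3) fun x =>
    if x = 0 then av k 0
    else if x = 1 then ∑ p ∈ Finset.range N, av k p
    else ∑ p ∈ Finset.range (N - 1), ((p : k) + 1)⁻¹ • bv k p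

/-- the homotopy `K_N : Ω∨ → Ω∨`. -/
def Km (N : ℕ) : Om k →ₗ[k] Om k :=
  Finsupp.lift (Om k) k (ℕ ⊕ ℕ) fun x =>
    match x with
    | Sum.inl 0 => 0
    | Sum.inl 1 => - ∑ j ∈ Finset.Ico 1 (N - 1), ((j : k) + 1)⁻¹ • bv k j
    | Sum.inl (i + 2) => ((i : k) + 2)⁻¹ • bv k (i + 1)
    | Sum.inr _ => 0

/-- the filtration `Ω∨_(N)`, spanned by the `α_j` with `j ≥ N` and the `β_j` with `j ≥ N - 1`. -/
def Filt (N : ℕ) : Submodule k (Om k) :=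
  Submodule.span k
    ({x | ∃ j, N ≤ j ∧ x = av k j} ∪ {x | ∃ j, N ≤ j + 1 ∧ x = bv k j})

end

noncomputable section
variable (k : Type) [Field k] [CharZero k]

/-- the comultiplication `δ` on `Ω∨`:
`δ α_i = ∑_{a+b=i} α_a ⊗ α_b`, `δ β_i = ∑_{a+b=i} (β_a ⊗ α_b + α_a ⊗ β_b)`. -/
def δm : Om k →ₗ[k] Om k ⊗[k] Om k :=
  Finsupp.lift (Om k ⊗[k] Om k) k (ℕ ⊕ ℕ) fun x =>
    match x with
    | Sum.inl i => ∑ ab ∈ Finset.HasAntidiagonal.antidiagonal i, av k ab.1 ⊗ₜ[k] av k ab.2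
    | Sum.inr i => ∑ ab ∈ Finset.HasAntidiagonal.antidiagonal i,
        (bv k ab.1 ⊗ₜ[k] av k ab.2 + av k ab.1 ⊗ₜ[k] bv k ab.2)

/-- the counit `ε` on `Ω∨`: `ε α_0 = 1`, `ε α_i = 0` for `i ≥ 1`, `ε β_i = 0`. -/
def εm : Om k →ₗ[k] k :=
  Finsupp.lift k k (ℕ ⊕ ℕ) fun x =>
    match x with
    | Sum.inl 0 => 1
    | _ => 0

end

noncomputable section
variable (k : Type) [Field k] [CharZero k]

/-- `OmPow n` is the (n+1)-fold tensor power `(Ω∨)^{⊗(n+1)}`. -/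
def OmPow : ℕ → ModuleCat k
  | 0 => ModuleCat.of k (Om k)
  | n + 1 => ModuleCat.of k (Om k ⊗[k] (OmPow n))

/-- `CcPow n` is the (n+1)-fold tensor power `C^{⊗(n+1)}`. -/
def CcPow : ℕ → ModuleCat k
  | 0 => ModuleCat.of k (Cc k)
  | n + 1 => ModuleCat.of k (Cc k ⊗[k] (CcPow n))

/-- `δiter n : Ω∨ → (Ω∨)^{⊗(n+1)}` is the `n`-fold iterated comultiplication
`δ^{(n)}`, defined recursively by `δ^{(0)} = id` and `δ^{(n+1)} = (id ⊗ δ^{(n)}) ∘ δ`. -/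
def δiter : (n : ℕ) → (Om k →ₗ[k] OmPow k n)
  | 0 => LinearMap.id
  | n + 1 => (TensorProduct.map LinearMap.id (δiter n)) ∘ₗ δm k

/-- `θpow n : (Ω∨)^{⊗(n+1)} → C^{⊗(n+1)}` is the (n+1)-fold tensor power `θ^{⊗(n+1)}`. -/
def θpow : (n : ℕ) → (OmPow k n →ₗ[k] CcPow k n)
  | 0 => θm k
  | n + 1 => TensorProduct.map (θm k) (θpow n)

/-- the pure tensor `x ⊗ x ⊗ ⋯ ⊗ x` (`n+1` factors) in `C^{⊗(n+1)}`. -/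
def cpow (x : Cc k) : (n : ℕ) → CcPow k n
  | 0 => x
  | n + 1 => x ⊗ₜ[k] cpow x n

/-- the pure tensor `f 0 ⊗ f 1 ⊗ ⋯ ⊗ f n` in `C^{⊗(n+1)}`. -/
def tensorOf (f : ℕ → Cc k) : (n : ℕ) → CcPow k n
  | 0 => f 0
  | n + 1 => f 0 ⊗ₜ[k] tensorOf (fun i => f (i + 1)) n

end

noncomputable section Aux
variable (k : Type) [Field k] [CharZero k]

lemma lift_single {M : Type} [AddCommGroup M] [Module k M] {X : Type} (f : X → M) (x : X) :
    Finsupp.lift M k X f (Finsupp.single x 1) = f x := by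
  simp [Finsupp.lift_apply, Finsupp.sum_single_index]

lemma θm_av (p : ℕ) (hp : 2 ≤ p) : θm k (av k p) = 0 := by
  obtain ⟨q, rfl⟩ : ∃ q, p = q + 2 := ⟨p - 2, by omega⟩
  simp [θm, av, lift_single]

lemma θm_bv (p : ℕ) (hp : 1 ≤ p) : θm k (bv k p) = 0 := by
  obtain ⟨q, rfl⟩ : ∃ q, p = q + 1 := ⟨p - 1, by omega⟩
  simp [θm, bv, lift_single]

lemma δm_av (i : ℕ) :
    δm k (av k i) = ∑ ab ∈ Finset.HasAntidiagonal.antidiagonal i, av k ab.1 ⊗ₜ[k] av k ab.2 := by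
  simp [δm, av, lift_single]

lemma δm_bv (i : ℕ) :
    δm k (bv k i) = ∑ ab ∈ Finset.HasAntidiagonal.antidiagonal i,
      (bv k ab.1 ⊗ₜ[k] av k ab.2 + av k ab.1 ⊗ₜ[k] bv k ab.2) := by
  simp [δm, bv, lift_single]

lemma map_tmul' (m : ℕ) (x y : Om k) :
    θpow k (m+1) ((TensorProduct.map (LinearMap.id (R:=k) (M:=Om k)) (δiter k m)) (x ⊗ₜ[k] y))
      = θm k x ⊗ₜ[k] θpow k m (δiter k m y) := by
  rfl

lemma vanish (m : ℕ) :
    (∀ p, m + 2 ≤ p → θpow k m (δiter k m (av k p)) = 0)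
      ∧ (∀ p, m + 1 ≤ p → θpow k m (δiter k m (bv k p)) = 0) := by
  induction m with
  | zero =>
      refine ⟨fun p hp => ?_, fun p hp => ?_⟩
      · exact θm_av k p hp
      · exact θm_bv k p hp
  | succ m ih =>
      refine ⟨fun p hp => ?_, fun p hp => ?_⟩
      · show θpow k (m+1) ((TensorProduct.map LinearMap.id (δiter k m)) (δm k (av k p))) = 0
        rw [δm_av, map_sum]
        erw [map_sum]
        apply Finset.sum_eq_zero
        rintro ⟨a, b⟩ hab
        simp only [Finset.HasAntidiagonal.mem_antidiagonal] at hab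
        rw [map_tmul']
        by_cases ha : 2 ≤ a
        · rw [θm_av k a ha, TensorProduct.zero_tmul]; rfl
        · rw [ih.1 b (by omega), TensorProduct.tmul_zero]; rfl
      · show θpow k (m+1) ((TensorProduct.map LinearMap.id (δiter k m)) (δm k (bv k p))) = 0
        rw [δm_bv, map_sum]
        erw [map_sum]
        apply Finset.sum_eq_zero
        rintro ⟨a, b⟩ hab
        simp only [Finset.HasAntidiagonal.mem_antidiagonal] at hab
        rw [map_add]
        erw [map_add]
        rw [map_tmul', map_tmul']
        have h1 : θm k (bv k a) ⊗ₜ[k] θpow k m (δiter k m (av k b)) = 0 := by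
          by_cases ha : 1 ≤ a
          · rw [θm_bv k a ha, TensorProduct.zero_tmul]
          · rw [ih.1 b (by omega), TensorProduct.tmul_zero]
        have h2 : θm k (av k a) ⊗ₜ[k] θpow k m (δiter k m (bv k b)) = 0 := by
          by_cases ha : 2 ≤ a
          · rw [θm_av k a ha, TensorProduct.zero_tmul]
          · rw [ih.2 b (by omega), TensorProduct.tmul_zero]
        rw [h1, h2]
        erw [add_zero]; rfl

lemma sumA (m N : ℕ) (h : m + 1 < N) :
    ∑ p ∈ Finset.range N, θpow k m (δiter k m (av k p))
      = ∑ p ∈ Finset.range (m + 2), θpow k m (δiter k m (av k p)) := by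
  symm
  apply Finset.sum_subset (Finset.range_subset_range.mpr (by omega))
  intro p _ hp
  simp only [Finset.mem_range, not_lt] at hp
  exact (vanish k m).1 p hp

lemma sumB (m N : ℕ) (h : m + 1 < N) :
    ∑ p ∈ Finset.range (N - 1), ((p : k) + 1)⁻¹ • θpow k m (δiter k m (bv k p))
      = ∑ p ∈ Finset.range (m + 1), ((p : k) + 1)⁻¹ • θpow k m (δiter k m (bv k p)) := by
  symm
  apply Finset.sum_subset (Finset.range_subset_range.mpr (by omega))
  intro p _ hp
  simp only [Finset.mem_range, not_lt] at hp
  rw [(vanish k m).2 p hp, smul_zero]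

end Aux

/-- The naively transferred cooperations stabilise: for all `n ≥ 1` and
all `N, N' > n`, the maps `θ^{⊗n} ∘ δ^{(n-1)} ∘ ω_N` and `θ^{⊗n} ∘ δ^{(n-1)} ∘ ω_{N'}`
from `C` to `C^{⊗n}` are equal. -/
theorem statement7 (k : Type) [Field k] [CharZero k] (n N N' : ℕ)
    (hn : 1 ≤ n) (hN : n < N) (hN' : n < N') :
    θpow k (n - 1) ∘ₗ δiter k (n - 1) ∘ₗ ωm k N
      = θpow k (n - 1) ∘ₗ δiter k (n - 1) ∘ₗ ωm k N' := by
  obtain ⟨m, rfl⟩ : ∃ m, n = m + 1 := ⟨n - 1, by omega⟩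
  have hm : m + 1 - 1 = m := rfl
  rw [hm]
  apply Module.Basis.ext (Finsupp.basisSingleOne (R := k) (ι := Fin 3))
  intro x
  simp only [Finsupp.coe_basisSingleOne, LinearMap.comp_apply]
  fin_cases x
  · show θpow k m (δiter k m (ωm k N (Finsupp.single 0 1)))
      = θpow k m (δiter k m (ωm k N' (Finsupp.single 0 1)))
    rw [show ωm k N (Finsupp.single (0 : Fin 3) 1) = av k 0 from by simp [ωm, lift_single],
        show ωm k N' (Finsupp.single (0 : Fin 3) 1) = av k 0 from by simp [ωm, lift_single]]
  · show θpow k m (δiter k m (ωm k N (Finsupp.single 1 1)))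
      = θpow k m (δiter k m (ωm k N' (Finsupp.single 1 1)))
    rw [show ωm k N (Finsupp.single 1 1) = ∑ p ∈ Finset.range N, av k p from by
          simp [ωm, lift_single],
        show ωm k N' (Finsupp.single 1 1) = ∑ p ∈ Finset.range N', av k p from by
          simp [ωm, lift_single],
        map_sum, map_sum, map_sum, map_sum, sumA k m N hN, sumA k m N' hN']
  · show θpow k m (δiter k m (ωm k N (Finsupp.single 2 1)))
      = θpow k m (δiter k m (ωm k N' (Finsupp.single 2 1)))
    rw [show ωm k N (Finsupp.single 2 1)
          = ∑ p ∈ Finset.range (N - 1), ((p : k) + 1)⁻¹ • bv k p from by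
          simp [ωm, lift_single],
        show ωm k N' (Finsupp.single 2 1)
          = ∑ p ∈ Finset.range (N' - 1), ((p : k) + 1)⁻¹ • bv k p from by
          simp [ωm, lift_single],
        map_sum, map_sum, map_sum, map_sum]
    simp only [map_smul]
    rw [sumB k m N hN, sumB k m N' hN']
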